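/- Under the collaborative recommendation model, E[ (1/|L_n|) 1_{L_n ≠ ∅} ] ≤ 2 E[ 1/|R_n| ] + 2 E[ (1/|R_n|) Σ_{i∈R_n} E[α_ni] ]. -/

import Mathlib

open MeasureTheory ProbabilityTheory Finset Filter
open scoped BigOperators Topology

noncomputable section

namespace Collab

/-- Discrete measurable structure on finsets (used for the random sets of rated items). -/
instance instMeasFinset (α : Type*) : MeasurableSpace (Finset α) := ⊤

/-- Vectors of ratings. -/
abbrev Vec (d : ℕ) := Fin d → ℝ

/-- The Euclidean norm on `Fin d → ℝ`. -/
def nrm {d : ℕ} (x : Vec d) : ℝ := Real.sqrt (∑ j, x j ^ 2)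

/-- The cosine-type similarity `S̄`: the sum is restricted to the set
`J = {j : x j ≠ 0 ∧ x' j ≠ 0}`; the convention `S̄ = 0` when `J = ∅` is automatic
from `0 / 0 = 0`. -/
def simBar {d : ℕ} (x x' : Vec d) : ℝ :=
  (∑ j ∈ Finset.univ.filter (fun j => x j ≠ 0 ∧ x' j ≠ 0), x j * x' j) /
    (Real.sqrt (∑ j ∈ Finset.univ.filter (fun j => x j ≠ 0 ∧ x' j ≠ 0), x j ^ 2) *
      Real.sqrt (∑ j ∈ Finset.univ.filter (fun j => x j ≠ 0 ∧ x' j ≠ 0), x' j ^ 2))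

/-- Masking a vector by a set of coordinates: coordinates outside `m` are set to `0`. -/
def mask {d : ℕ} (m : Finset (Fin d)) (x : Vec d) : Vec d := fun j => if j ∈ m then x j else 0

/-- `i` is among the `k` points most similar to the target among the points indexed by `Rs`,
for the similarity `sim`, ties being broken by smaller index: the number of indices
`j ∈ Rs` that are strictly more similar than `i`, or as similar with `j ≤ i`
(this count includes `i` itself), is at most `k`. -/
def amongMS (sim : ℕ → ℝ) (Rs : Finset ℕ) (k i : ℕ) : Prop :=
  i ∈ Rs ∧ (Rs.filter (fun j => sim i < sim j ∨ (sim j = sim i ∧ j ≤ i))).card ≤ k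

/-- Index type for the mutually independent ingredients of the model: the new user's pair
`(X, Y)`, the database pairs `(X_i, Y_i)`, the preference sequences `(M_i^n)_{n ≥ 1}`,
and the random set `M`. -/
inductive Idx where
  | newuser : Idx
  | user (i : ℕ) : Idx
  | mseq (i : ℕ) : Idx
  | m : Idx

/-- Codomains of the independent ingredients. -/
def idxType (d : ℕ) : Idx → Type
  | .newuser => Vec d × ℝ
  | .user _ => Vec d × ℝ
  | .mseq _ => ℕ → Finset (Fin d)
  | .m => Finset (Fin d)

instance (d : ℕ) : ∀ x, MeasurableSpace (idxType d x)
  | .newuser => inferInstanceAs (MeasurableSpace (Vec d × ℝ))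
  | .user _ => inferInstanceAs (MeasurableSpace (Vec d × ℝ))
  | .mseq _ => inferInstanceAs (MeasurableSpace (ℕ → Finset (Fin d)))
  | .m => inferInstanceAs (MeasurableSpace (Finset (Fin d)))

variable {d : ℕ} {Ω : Type} [MeasurableSpace Ω]

/-- The family of independent ingredients of the model. -/
def fam (X : Ω → Vec d) (Y : Ω → ℝ) (M : Ω → Finset (Fin d))
    (Xi : ℕ → Ω → Vec d) (Yi : ℕ → Ω → ℝ) (Mi : ℕ → ℕ → Ω → Finset (Fin d)) :
    ∀ x : Idx, Ω → idxType d x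
  | .newuser => fun ω => (X ω, Y ω)
  | .user i => fun ω => (Xi i ω, Yi i ω)
  | .mseq i => fun ω n => Mi i (n + 1) ω
  | .m => M

/-- The sequential stochastic model for collaborative recommendation.  `(X, Y)` is the new
user, `M` the set of items he has rated, `(Xi i, Yi i)` the database users,
`Mi i n = M_i^n` the set of items rated by user `i` at his `n`-th time period (`n ≥ 1`),
`Mgen n = M^n` the generic preference sequence and `R n = 𝓡_n` the set of users having
rated the item of interest at time `n`. -/
structure Model (d : ℕ) (s : ℝ) {Ω : Type} [MeasurableSpace Ω] (P : Measure Ω)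
    (X : Ω → Vec d) (Y : Ω → ℝ) (M : Ω → Finset (Fin d))
    (Xi : ℕ → Ω → Vec d) (Yi : ℕ → Ω → ℝ)
    (Mi : ℕ → ℕ → Ω → Finset (Fin d)) (Mgen : ℕ → Ω → Finset (Fin d))
    (R : ℕ → Ω → Finset ℕ) : Prop where
  isProb : IsProbabilityMeasure P
  dim_pos : 1 ≤ d
  s_gt_one : 1 < s
  meas_X : Measurable X
  meas_Y : Measurable Y
  meas_M : Measurable M
  meas_Xi : ∀ i, Measurable (Xi i)
  meas_Yi : ∀ i, Measurable (Yi i)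
  meas_Mi : ∀ i n, Measurable (Mi i n)
  meas_Mgen : ∀ n, Measurable (Mgen n)
  meas_R : ∀ n, Measurable (R n)
  X_range : ∀ ω j, X ω j ∈ Set.Icc (1 : ℝ) s
  Y_range : ∀ ω, Y ω ∈ Set.Icc (1 : ℝ) s
  M_ne : ∀ ω, (M ω).Nonempty
  Mi_ne : ∀ i n ω, 1 ≤ n → (Mi i n ω).Nonempty
  Mi_mono : ∀ i n ω, Mi i n ω ⊆ Mi i (n + 1) ω
  Mgen_ne : ∀ n ω, 1 ≤ n → (Mgen n ω).Nonempty
  Mgen_mono : ∀ n ω, Mgen n ω ⊆ Mgen (n + 1) ω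
  /-- the database pairs are distributed as the new user's pair -/
  ident_user : ∀ i, 1 ≤ i → P.map (fun ω => (Xi i ω, Yi i ω)) = P.map (fun ω => (X ω, Y ω))
  /-- every preference sequence is distributed as the generic sequence `(M^n)_{n ≥ 1}` -/
  ident_seq : ∀ i, 1 ≤ i →
    P.map (fun ω => (fun n => Mi i (n + 1) ω)) = P.map (fun ω => (fun n => Mgen (n + 1) ω))
  /-- `M^1` is distributed as `M` -/
  ident_M1 : P.map (Mgen 1) = P.map M
  /-- a.s. there is a (random) time `n₀` at which all `d` items are rated -/
  Mgen_full : ∀ᵐ ω ∂P, ∃ n, 1 ≤ n ∧ Mgen n ω = Finset.univ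
  R_sub : ∀ n ω, R n ω ⊆ Finset.Icc 1 n
  R_ne : ∀ n ω, 1 ≤ n → (R n ω).Nonempty
  R_mono : ∀ n ω, R n ω ⊆ R (n + 1) ω
  /-- mutual independence of the new user, the database pairs, the preference sequences
  and `M` -/
  indep : iIndepFun (fam X Y M Xi Yi Mi) P
  /-- `𝓡_n` is independent of `M` and of the preference sequences -/
  indep_R : ∀ n, IndepFun (R n) (fun ω => (M ω, fun i m => Mi i (m + 1) ω)) P

variable (P : Measure Ω)

/-- `X* = masked version of X`. -/
def XstarF (M : Ω → Finset (Fin d)) (X : Ω → Vec d) (ω : Ω) : Vec d := mask (M ω) (X ω)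

/-- `X_i^{(n)}`: the coordinates of `X_i` corated (at time `n`) by user `i` and the new user. -/
def XinF (M : Ω → Finset (Fin d)) (Xi : ℕ → Ω → Vec d) (Mi : ℕ → ℕ → Ω → Finset (Fin d))
    (n i : ℕ) (ω : Ω) : Vec d := mask (Mi i (n + 1 - i) ω ∩ M ω) (Xi i ω)

/-- `X_i^*`: the coordinates of `X_i` rated by the new user. -/
def XistarF (M : Ω → Finset (Fin d)) (Xi : ℕ → Ω → Vec d) (i : ℕ) (ω : Ω) : Vec d :=
  mask (M ω) (Xi i ω)

/-- The penalty `p_i^{(n)} = |M_i^{n+1-i} ∩ M| / |M|`. -/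
def pinF (M : Ω → Finset (Fin d)) (Mi : ℕ → ℕ → Ω → Finset (Fin d)) (n i : ℕ) (ω : Ω) : ℝ :=
  ((Mi i (n + 1 - i) ω ∩ M ω).card : ℝ) / ((M ω).card : ℝ)

/-- The penalized similarity `S(X*, X_i^{(n)}) = p_i^{(n)} S̄(X*, X_i^{(n)})`. -/
def simS (X : Ω → Vec d) (M : Ω → Finset (Fin d)) (Xi : ℕ → Ω → Vec d)
    (Mi : ℕ → ℕ → Ω → Finset (Fin d)) (n i : ℕ) (ω : Ω) : ℝ :=
  pinF M Mi n i ω * simBar (XstarF M X ω) (XinF M Xi Mi n i ω)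

open scoped Classical in
/-- The `k_n`-NN weights `W_{ni}(X*)`, with the conventions `W_{ni} = 0` when
`|𝓡_n| < k_n` or `X_i^{(n)} = 0`. -/
def W (X : Ω → Vec d) (M : Ω → Finset (Fin d)) (Xi : ℕ → Ω → Vec d)
    (Mi : ℕ → ℕ → Ω → Finset (Fin d)) (R : ℕ → Ω → Finset ℕ) (k : ℕ → ℕ)
    (n i : ℕ) (ω : Ω) : ℝ :=
  if k n ≤ (R n ω).card ∧ XinF M Xi Mi n i ω ≠ 0 ∧
      amongMS (fun j => simS X M Xi Mi n j ω) (R n ω) (k n) i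
    then 1 / (k n : ℝ) else 0

/-- The cosine-type `k_n`-NN regression estimate `η_n(X*)`
(the convention `0 ⬝ ∞ = 0` is automatic since `y / 0 = 0` and `0 * y = 0` in Lean). -/
def etan (X : Ω → Vec d) (M : Ω → Finset (Fin d)) (Xi : ℕ → Ω → Vec d) (Yi : ℕ → Ω → ℝ)
    (Mi : ℕ → ℕ → Ω → Finset (Fin d)) (R : ℕ → Ω → Finset ℕ) (k : ℕ → ℕ)
    (n : ℕ) (ω : Ω) : ℝ :=
  nrm (XstarF M X ω) *
    ∑ i ∈ R n ω, W X M Xi Mi R k n i ω * (Yi i ω / nrm (XinF M Xi Mi n i ω))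

/-- The regression function evaluated at the new user: `η(X*) = E[Y | X*]`. -/
def etaX (X : Ω → Vec d) (Y : Ω → ℝ) (M : Ω → Finset (Fin d)) : Ω → ℝ :=
  P[Y|MeasurableSpace.comap (XstarF M X) inferInstance]

/-- `φ(X*) = E[Y / ‖X*‖ | X*/‖X*‖]`. -/
def phiX (X : Ω → Vec d) (Y : Ω → ℝ) (M : Ω → Finset (Fin d)) : Ω → ℝ :=
  P[fun ω => Y ω / nrm (XstarF M X ω)|MeasurableSpace.comap
    (fun ω => (nrm (XstarF M X ω))⁻¹ • XstarF M X ω) inferInstance]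

/-- `α_{ni} = P(M^{n+1-i} ⊉ M | M)`: by independence of `M` and the generic sequence, this
is the function of `M` given by `m ↦ P(M^{n+1-i} ⊉ m)`. -/
def alphaF (M : Ω → Finset (Fin d)) (Mgen : ℕ → Ω → Finset (Fin d)) (n i : ℕ) (ω : Ω) : ℝ :=
  (P {ω' | ¬ M ω ⊆ Mgen (n + 1 - i) ω'}).toReal

open scoped Classical in
/-- `L_n = {i ∈ 𝓡_n : T_i ≤ n}` where `T_i = min{k ≥ i : M ⊆ M_i^{k+1-i}}`. -/
def Lset (M : Ω → Finset (Fin d)) (Mi : ℕ → ℕ → Ω → Finset (Fin d)) (R : ℕ → Ω → Finset ℕ)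
    (n : ℕ) (ω : Ω) : Finset ℕ :=
  (R n ω).filter (fun i => ∃ kk, i ≤ kk ∧ kk ≤ n ∧ M ω ⊆ Mi i (kk + 1 - i) ω)

open scoped Classical in
/-- The Euclidean nearest neighbor weights `W*_{ni}(X*)` over the set `L_n`, computed with
the similarity `S̄(X*, X_i^*)`. -/
def Wstar (X : Ω → Vec d) (M : Ω → Finset (Fin d)) (Xi : ℕ → Ω → Vec d)
    (Mi : ℕ → ℕ → Ω → Finset (Fin d)) (R : ℕ → Ω → Finset ℕ) (k : ℕ → ℕ)
    (n i : ℕ) (ω : Ω) : ℝ :=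
  if amongMS (fun j => simBar (XstarF M X ω) (XistarF M Xi j ω)) (Lset M Mi R n ω) (k n) i
    then 1 / (k n : ℝ) else 0

section AuxStatement6

instance finsetMSC (α : Type*) : MeasurableSingletonClass (Finset α) :=
  ⟨fun _ => MeasurableSpace.measurableSet_top⟩

lemma measurableSet_finsetSet {α : Type*} (s : Set (Finset α)) : MeasurableSet s :=
  MeasurableSpace.measurableSet_top

variable {d : ℕ} {s : ℝ} {Ω : Type} [MeasurableSpace Ω] {P : Measure Ω}
    {X : Ω → Vec d} {Y : Ω → ℝ} {M : Ω → Finset (Fin d)}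
    {Xi : ℕ → Ω → Vec d} {Yi : ℕ → Ω → ℝ}
    {Mi : ℕ → ℕ → Ω → Finset (Fin d)} {Mgen : ℕ → Ω → Finset (Fin d)}
    {R : ℕ → Ω → Finset ℕ}

/-- The set `{M ⊄ M_i^{n+1-i}}`. -/
def SSet (M : Ω → Finset (Fin d)) (Mi : ℕ → ℕ → Ω → Finset (Fin d)) (n i : ℕ) : Set Ω :=
  {ω | ¬ M ω ⊆ Mi i (n + 1 - i) ω}

/-- Indicator of `SSet`. -/
def chi (M : Ω → Finset (Fin d)) (Mi : ℕ → ℕ → Ω → Finset (Fin d)) (n i : ℕ) : Ω → ℝ :=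
  (SSet M Mi n i).indicator fun _ => 1

open scoped Classical in
/-- `1/|R_n|` if `i ∈ R_n`, else `0`. -/
def gw (R : ℕ → Ω → Finset ℕ) (n i : ℕ) : Ω → ℝ :=
  fun ω => if i ∈ R n ω then 1 / ((R n ω).card : ℝ) else 0

lemma integrable_of_bdd [IsFiniteMeasure P] {f : Ω → ℝ} {C : ℝ}
    (hm : Measurable f) (hb : ∀ ω, |f ω| ≤ C) : Integrable f P :=
  (integrable_const C).mono' hm.aestronglyMeasurable
    (ae_of_all _ fun ω => by simpa [Real.norm_eq_abs] using hb ω)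

lemma hmeas_sub (hmodel : Model d s P X Y M Xi Yi Mi Mgen R) (i k : ℕ) :
    MeasurableSet {ω | M ω ⊆ Mi i k ω} := by
  have hpair : Measurable fun ω => (M ω, Mi i k ω) :=
    (hmodel.meas_M).prodMk (hmodel.meas_Mi i k)
  have hset : MeasurableSet {p : Finset (Fin d) × Finset (Fin d) | p.1 ⊆ p.2} :=
    (Set.to_countable _).measurableSet
  exact hpair hset

lemma hmeas_SSet (hmodel : Model d s P X Y M Xi Yi Mi Mgen R) (n i : ℕ) :
    MeasurableSet (SSet M Mi n i) :=
  (hmeas_sub hmodel i (n + 1 - i)).compl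

lemma meas_chi (hmodel : Model d s P X Y M Xi Yi Mi Mgen R) (n i : ℕ) :
    Measurable (chi M Mi n i) :=
  measurable_const.indicator (hmeas_SSet hmodel n i)

lemma chi_nonneg (n i : ℕ) (ω : Ω) : 0 ≤ chi M Mi n i ω := by
  classical
  unfold chi
  by_cases h : ω ∈ SSet M Mi n i
  · rw [Set.indicator_of_mem h]; norm_num
  · rw [Set.indicator_of_notMem h]

lemma chi_abs_le (n i : ℕ) (ω : Ω) : |chi M Mi n i ω| ≤ 1 := by
  classical
  unfold chi
  by_cases h : ω ∈ SSet M Mi n i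
  · rw [Set.indicator_of_mem h]; norm_num
  · rw [Set.indicator_of_notMem h]; norm_num

lemma meas_gw (hmodel : Model d s P X Y M Xi Yi Mi Mgen R) (n i : ℕ) :
    Measurable (gw R n i) :=
  (measurable_of_countable
    (fun t : Finset ℕ => if i ∈ t then 1 / (t.card : ℝ) else 0)).comp (hmodel.meas_R n)

lemma gw_nonneg (n i : ℕ) (ω : Ω) : 0 ≤ gw R n i ω := by
  unfold gw; split_ifs
  · positivity
  · exact le_rfl

lemma gw_abs_le (n i : ℕ) (ω : Ω) : |gw R n i ω| ≤ 1 := by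
  unfold gw; split_ifs with h
  · have h1 : (1 : ℝ) ≤ ((R n ω).card : ℝ) := by
      exact_mod_cast Finset.card_pos.mpr ⟨i, h⟩
    rw [abs_of_nonneg (by positivity)]
    rw [div_le_one (by linarith)]
    exact h1
  · norm_num

lemma meas_pred (hmodel : Model d s P X Y M Xi Yi Mi Mgen R) (n i : ℕ) :
    MeasurableSet {ω | ∃ kk, i ≤ kk ∧ kk ≤ n ∧ M ω ⊆ Mi i (kk + 1 - i) ω} := by
  have h : {ω | ∃ kk, i ≤ kk ∧ kk ≤ n ∧ M ω ⊆ Mi i (kk + 1 - i) ω} =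
      ⋃ kk ∈ Finset.Icc i n, {ω | M ω ⊆ Mi i (kk + 1 - i) ω} := by
    ext ω
    simp only [Set.mem_setOf_eq, Set.mem_iUnion, Finset.mem_Icc, exists_prop]
    exact ⟨fun ⟨kk, h1, h2, h3⟩ => ⟨kk, ⟨h1, h2⟩, h3⟩,
      fun ⟨kk, ⟨h1, h2⟩, h3⟩ => ⟨kk, h1, h2, h3⟩⟩
  rw [h]
  exact (Finset.Icc i n).measurableSet_biUnion fun kk _ => hmeas_sub hmodel i _

lemma meas_Lset (hmodel : Model d s P X Y M Xi Yi Mi Mgen R) (n : ℕ) :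
    Measurable (fun ω => Lset M Mi R n ω) := by
  classical
  apply measurable_to_countable'
  intro t
  have hmem : ∀ (ω : Ω) (i : ℕ), i ∈ Lset M Mi R n ω ↔
      i ∈ R n ω ∧ ∃ kk, i ≤ kk ∧ kk ≤ n ∧ M ω ⊆ Mi i (kk + 1 - i) ω := by
    intro ω i; simp [Lset]
  have hdecomp : (fun ω => Lset M Mi R n ω) ⁻¹' {t} =
      ⋃ u : Finset ℕ, ((fun ω => R n ω) ⁻¹' {u} ∩
        ((⋂ i ∈ t, {ω : Ω | i ∈ u ∧ ∃ kk, i ≤ kk ∧ kk ≤ n ∧ M ω ⊆ Mi i (kk + 1 - i) ω}) ∩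
         (⋂ i ∈ u \ t, {ω : Ω | ∃ kk, i ≤ kk ∧ kk ≤ n ∧ M ω ⊆ Mi i (kk + 1 - i) ω}ᶜ))) := by
    ext ω
    simp only [Set.mem_preimage, Set.mem_singleton_iff, Set.mem_iUnion, Set.mem_inter_iff,
      Set.mem_iInter, Set.mem_setOf_eq, Finset.mem_sdiff, Set.mem_compl_iff, and_imp]
    constructor
    · intro h
      refine ⟨R n ω, rfl, fun i hi => ?_, fun i hiu hit => ?_⟩
      · have hL : i ∈ Lset M Mi R n ω := by rw [h]; exact hi
        exact (hmem ω i).mp hL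
      · intro hQ
        have hL : i ∈ Lset M Mi R n ω := (hmem ω i).mpr ⟨hiu, hQ⟩
        rw [h] at hL; exact hit hL
    · rintro ⟨u, hu, h1, h2⟩
      apply Finset.ext
      intro i
      rw [hmem ω i, hu]
      constructor
      · rintro ⟨hiu, hQ⟩
        by_contra hit
        exact h2 i hiu hit hQ
      · intro hit
        exact h1 i hit
  rw [hdecomp]
  refine MeasurableSet.iUnion fun u => ((hmodel.meas_R n) (measurableSet_finsetSet {u})).inter
    (MeasurableSet.inter ?_ ?_)
  · refine t.measurableSet_biInter fun i _ => ?_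
    rw [Set.setOf_and]
    exact (MeasurableSet.const _).inter (meas_pred hmodel n i)
  · exact (u \ t).measurableSet_biInter fun i _ => (meas_pred hmodel n i).compl

lemma indepMseq (hmodel : Model d s P X Y M Xi Yi Mi Mgen R) (i : ℕ) :
    IndepFun M (fun ω => fun k => Mi i (k + 1) ω) P := by
  have h := hmodel.indep.indepFun
    (i := Idx.m) (j := Idx.mseq i) (fun hh => Idx.noConfusion hh)
  exact h

lemma hq_lemma (hmodel : Model d s P X Y M Xi Yi Mi Mgen R) {n i : ℕ}
    (hi1 : 1 ≤ i) (hin : i ≤ n) (m : Finset (Fin d)) :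
    P {ω | ¬ m ⊆ Mi i (n + 1 - i) ω} = P {ω' | ¬ m ⊆ Mgen (n + 1 - i) ω'} := by
  have he : n + 1 - i = n - i + 1 := by omega
  have hF : Measurable fun ω => (fun k => Mi i (k + 1) ω) :=
    measurable_pi_lambda _ fun k => hmodel.meas_Mi i (k + 1)
  have hG : Measurable fun ω => (fun k => Mgen (k + 1) ω) :=
    measurable_pi_lambda _ fun k => hmodel.meas_Mgen (k + 1)
  have hT : MeasurableSet ((fun f : ℕ → Finset (Fin d) => f (n - i)) ⁻¹' {t | ¬ m ⊆ t}) :=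
    measurable_pi_apply (n - i) (measurableSet_finsetSet _)
  have h1 := congrArg (fun μ : Measure (ℕ → Finset (Fin d)) =>
    μ ((fun f : ℕ → Finset (Fin d) => f (n - i)) ⁻¹' {t | ¬ m ⊆ t})) (hmodel.ident_seq i hi1)
  rw [Measure.map_apply hF hT, Measure.map_apply hG hT] at h1
  rw [he]
  exact h1

lemma chi_integral (hmodel : Model d s P X Y M Xi Yi Mi Mgen R) {n i : ℕ}
    (hi1 : 1 ≤ i) (hin : i ≤ n) :
    ∫ ω, chi M Mi n i ω ∂P = ∫ ω', alphaF P M Mgen n i ω' ∂P := by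
  classical
  haveI := hmodel.isProb
  have he : n + 1 - i = n - i + 1 := by omega
  have hLHS : ∫ ω, chi M Mi n i ω ∂P = (P (SSet M Mi n i)).toReal := by
    rw [show chi M Mi n i = (SSet M Mi n i).indicator (fun _ => (1 : ℝ)) from rfl]
    rw [integral_indicator_const (1 : ℝ) (hmeas_SSet hmodel n i)]
    simp
    rfl
  have hS : SSet M Mi n i = ⋃ m ∈ (Finset.univ : Finset (Finset (Fin d))),
      ({ω | M ω = m} ∩ {ω | ¬ m ⊆ Mi i (n + 1 - i) ω}) := by
    ext ω
    simp only [SSet, Set.mem_setOf_eq, Set.mem_iUnion, Set.mem_inter_iff, Finset.mem_univ,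
      exists_prop, true_and, Set.mem_setOf_eq]
    exact ⟨fun h => ⟨M ω, rfl, h⟩, by rintro ⟨m, rfl, h⟩; exact h⟩
  have hPS : P (SSet M Mi n i) = ∑ m ∈ (Finset.univ : Finset (Finset (Fin d))),
      P {ω | M ω = m} * P {ω' | ¬ m ⊆ Mgen (n + 1 - i) ω'} := by
    rw [hS, measure_biUnion_finset ?_ ?_]
    · refine Finset.sum_congr rfl fun m _ => ?_
      have hT : MeasurableSet ((fun f : ℕ → Finset (Fin d) => f (n - i)) ⁻¹' {t | ¬ m ⊆ t}) :=
        measurable_pi_apply (n - i) (measurableSet_finsetSet _)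
      have hmm : MeasurableSet ({m} : Set (Finset (Fin d))) := measurableSet_finsetSet _
      have h2 := (indepMseq hmodel i).measure_inter_preimage_eq_mul
        (s := {m}) (t := (fun f : ℕ → Finset (Fin d) => f (n - i)) ⁻¹' {t | ¬ m ⊆ t}) hmm hT
      rw [← hq_lemma hmodel hi1 hin m, he]
      exact h2
    · intro m1 _ m2 _ hne
      refine Set.disjoint_left.mpr ?_
      rintro ω ⟨h1, -⟩ ⟨h2, -⟩
      exact hne (h1.symm.trans h2)
    · intro m _
      exact (hmodel.meas_M (measurableSet_finsetSet {m})).inter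
        (hmodel.meas_Mi i (n + 1 - i) (measurableSet_finsetSet {t | ¬ m ⊆ t}))
  have hRHS : ∫ ω', alphaF P M Mgen n i ω' ∂P =
      ∑ m ∈ (Finset.univ : Finset (Finset (Fin d))),
        (P {ω' | ¬ m ⊆ Mgen (n + 1 - i) ω'}).toReal * (P {ω | M ω = m}).toReal := by
    have hpt : ∀ ω, alphaF P M Mgen n i ω =
        ∑ m ∈ (Finset.univ : Finset (Finset (Fin d))),
          Set.indicator {ω'' | M ω'' = m}
            (fun _ => (P {ω₀ | ¬ m ⊆ Mgen (n + 1 - i) ω₀}).toReal) ω := by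
      intro ω
      rw [Finset.sum_eq_single (M ω)]
      · rw [Set.indicator_of_mem (show ω ∈ {ω'' | M ω'' = M ω} from rfl)]
        rfl
      · intro m _ hne
        exact Set.indicator_of_notMem
          (s := {ω'' | M ω'' = m}) (fun h => hne (show M ω = m from h).symm)
          (fun _ => (P {ω₀ | ¬ m ⊆ Mgen (n + 1 - i) ω₀}).toReal)
      · intro h; exact absurd (Finset.mem_univ _) h
    rw [show (fun ω' => alphaF P M Mgen n i ω') =
        fun ω' => ∑ m ∈ (Finset.univ : Finset (Finset (Fin d))),
          Set.indicator {ω'' | M ω'' = m}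
            (fun _ => (P {ω₀ | ¬ m ⊆ Mgen (n + 1 - i) ω₀}).toReal) ω' from funext hpt]
    rw [integral_finset_sum _ fun m _ =>
      (integrable_const _).indicator
        (show MeasurableSet {ω'' | M ω'' = m} from
          hmodel.meas_M (measurableSet_finsetSet {m}))]
    refine Finset.sum_congr rfl fun m _ => ?_
    rw [integral_indicator_const _ (show MeasurableSet {ω'' | M ω'' = m} from
      hmodel.meas_M (measurableSet_finsetSet {m}))]
    rw [smul_eq_mul, mul_comm]
    rfl
  rw [hLHS, hPS, hRHS]
  rw [ENNReal.toReal_sum (fun m _ => ENNReal.mul_ne_top (measure_ne_top P _) (measure_ne_top P _))]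
  refine Finset.sum_congr rfl fun m _ => ?_
  rw [ENNReal.toReal_mul, mul_comm]

end AuxStatement6
section MainAux

variable {d : ℕ} {s : ℝ} {Ω : Type} [MeasurableSpace Ω] {P : Measure Ω}
    {X : Ω → Vec d} {Y : Ω → ℝ} {M : Ω → Finset (Fin d)}
    {Xi : ℕ → Ω → Vec d} {Yi : ℕ → Ω → ℝ}
    {Mi : ℕ → ℕ → Ω → Finset (Fin d)} {Mgen : ℕ → Ω → Finset (Fin d)}
    {R : ℕ → Ω → Finset ℕ}

lemma gw_chi_integral (hmodel : Model d s P X Y M Xi Yi Mi Mgen R) {n i : ℕ}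
    (hi1 : 1 ≤ i) (hin : i ≤ n) :
    ∫ ω, gw R n i ω * chi M Mi n i ω ∂P =
      (∫ ω, gw R n i ω ∂P) * (∫ ω', alphaF P M Mgen n i ω' ∂P) := by
  classical
  haveI := hmodel.isProb
  have he : n + 1 - i = n - i + 1 := by omega
  have hφ : Measurable (fun t : Finset ℕ => if i ∈ t then 1 / (t.card : ℝ) else 0) :=
    measurable_of_countable _
  have hsetss : MeasurableSet {p : Finset (Fin d) × Finset (Fin d) | p.1 ⊆ p.2} :=
    (Set.to_countable _).measurableSet
  have hmap : Measurable
      (fun p : Finset (Fin d) × (ℕ → ℕ → Finset (Fin d)) => (p.1, p.2 i (n - i))) :=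
    measurable_fst.prodMk
      ((measurable_pi_apply (n - i)).comp ((measurable_pi_apply i).comp measurable_snd))
  have hψ : Measurable (fun p : Finset (Fin d) × (ℕ → ℕ → Finset (Fin d)) =>
      if p.1 ⊆ p.2 i (n - i) then (0 : ℝ) else 1) :=
    Measurable.ite (hmap hsetss) measurable_const measurable_const
  have hind := (hmodel.indep_R n).comp hφ hψ
  have hgeq : ((fun t : Finset ℕ => if i ∈ t then 1 / (t.card : ℝ) else 0) ∘ (R n))
      = gw R n i := rfl
  have hχeq : ((fun p : Finset (Fin d) × (ℕ → ℕ → Finset (Fin d)) =>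
      if p.1 ⊆ p.2 i (n - i) then (0 : ℝ) else 1) ∘
        (fun ω => (M ω, fun j m => Mi j (m + 1) ω))) = chi M Mi n i := by
    funext ω
    simp only [Function.comp_apply]
    by_cases hss : M ω ⊆ Mi i (n - i + 1) ω
    · rw [if_pos hss]
      have hns : ω ∉ SSet M Mi n i := by
        simp only [SSet, Set.mem_setOf_eq, he, not_not]
        exact hss
      exact (Set.indicator_of_notMem hns (fun _ => (1:ℝ))).symm
    · rw [if_neg hss]
      have hs' : ω ∈ SSet M Mi n i := by
        simp only [SSet, Set.mem_setOf_eq, he]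
        exact hss
      exact (Set.indicator_of_mem hs' (fun _ => (1:ℝ))).symm
  rw [hgeq, hχeq] at hind
  have hInt1 : Integrable (gw R n i) P :=
    integrable_of_bdd (meas_gw hmodel n i) (gw_abs_le n i)
  have hInt2 : Integrable (chi M Mi n i) P :=
    integrable_of_bdd (meas_chi hmodel n i) (chi_abs_le n i)
  have hres := hind.integral_mul_eq_mul_integral hInt1.aestronglyMeasurable hInt2.aestronglyMeasurable
  rw [← chi_integral hmodel hi1 hin]
  exact hres

lemma pointwise_bound (hmodel : Model d s P X Y M Xi Yi Mi Mgen R) {n : ℕ}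
    (hn : 1 ≤ n) (ω : Ω) :
    (if Lset M Mi R n ω = ∅ then (0 : ℝ) else 1 / ((Lset M Mi R n ω).card : ℝ)) ≤
      2 * (1 / ((R n ω).card : ℝ)) +
        2 * ∑ i ∈ Finset.Icc 1 n, gw R n i ω * chi M Mi n i ω := by
  classical
  have hr1 : (1 : ℝ) ≤ ((R n ω).card : ℝ) := by
    exact_mod_cast Finset.card_pos.mpr (hmodel.R_ne n ω hn)
  have hLsub : Lset M Mi R n ω ⊆ R n ω := Finset.filter_subset _ _
  have hsub2 : R n ω \ Lset M Mi R n ω ⊆ Finset.Icc 1 n :=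
    Finset.Subset.trans (Finset.sdiff_subset) (hmodel.R_sub n ω)
  have hterm_nonneg : ∀ i, 0 ≤ gw R n i ω * chi M Mi n i ω := fun i =>
    mul_nonneg (gw_nonneg n i ω) (chi_nonneg n i ω)
  have hterm : ∀ i ∈ R n ω \ Lset M Mi R n ω,
      gw R n i ω * chi M Mi n i ω = 1 / ((R n ω).card : ℝ) := by
    intro i hi
    rw [Finset.mem_sdiff] at hi
    have hin : i ≤ n := (Finset.mem_Icc.mp (hmodel.R_sub n ω hi.1)).2
    have hpred : ¬ (∃ kk, i ≤ kk ∧ kk ≤ n ∧ M ω ⊆ Mi i (kk + 1 - i) ω) := by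
      intro hp
      exact hi.2 (by simp only [Lset, Finset.mem_filter]; exact ⟨hi.1, hp⟩)
    have hmemS : ω ∈ SSet M Mi n i := fun hss => hpred ⟨n, hin, le_rfl, hss⟩
    rw [show chi M Mi n i ω = 1 from Set.indicator_of_mem hmemS _, mul_one]
    simp only [gw, if_pos hi.1]
  have hsum : ((R n ω \ Lset M Mi R n ω).card : ℝ) * (1 / ((R n ω).card : ℝ)) ≤
      ∑ i ∈ Finset.Icc 1 n, gw R n i ω * chi M Mi n i ω := by
    have h1 : ∑ i ∈ R n ω \ Lset M Mi R n ω, gw R n i ω * chi M Mi n i ω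
        = ((R n ω \ Lset M Mi R n ω).card : ℝ) * (1 / ((R n ω).card : ℝ)) := by
      rw [Finset.sum_congr rfl hterm, Finset.sum_const, nsmul_eq_mul]
    rw [← h1]
    exact Finset.sum_le_sum_of_subset_of_nonneg hsub2 fun i _ _ => hterm_nonneg i
  have hsum_nonneg : 0 ≤ ∑ i ∈ Finset.Icc 1 n, gw R n i ω * chi M Mi n i ω :=
    Finset.sum_nonneg fun i _ => hterm_nonneg i
  by_cases hL : Lset M Mi R n ω = ∅
  · rw [if_pos hL]
    have h0 : 0 ≤ 1 / ((R n ω).card : ℝ) := by positivity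
    linarith
  · rw [if_neg hL]
    have ha1 : (1 : ℝ) ≤ ((Lset M Mi R n ω).card : ℝ) := by
      exact_mod_cast Finset.card_pos.mpr (Finset.nonempty_of_ne_empty hL)
    have hb0 : (0 : ℝ) ≤ ((R n ω \ Lset M Mi R n ω).card : ℝ) := by positivity
    have hcard : ((R n ω).card : ℝ) =
        ((Lset M Mi R n ω).card : ℝ) + ((R n ω \ Lset M Mi R n ω).card : ℝ) := by
      have h1 := Finset.card_sdiff_of_subset hLsub
      have h2 := Finset.card_le_card hLsub
      rw [← Nat.cast_add]
      norm_cast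
      omega
    have hmain : 1 / ((Lset M Mi R n ω).card : ℝ) ≤ 2 * (1 / ((R n ω).card : ℝ)) +
        2 * (((R n ω \ Lset M Mi R n ω).card : ℝ) * (1 / ((R n ω).card : ℝ))) := by
      rw [hcard]
      set a := ((Lset M Mi R n ω).card : ℝ) with hadef
      set b := ((R n ω \ Lset M Mi R n ω).card : ℝ) with hbdef
      have hab : (0 : ℝ) < a + b := by linarith
      have h3 : 1 / a ≤ (2 + 2 * b) / (a + b) := by
        rw [div_le_div_iff₀ (by linarith) hab]
        nlinarith
      calc 1 / a ≤ (2 + 2 * b) / (a + b) := h3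
        _ = 2 * (1 / (a + b)) + 2 * (b * (1 / (a + b))) := by ring
    linarith

end MainAux
/-- **Lemma 6.2, second statement.**
`E[(1/|L_n|) 1_(L_n ≠ ∅)] ≤ 2 E[1/|𝓡_n|] + 2 E[(1/|𝓡_n|) ∑_(i ∈ 𝓡_n) E α_ni]`. -/
theorem statement6
    {d : ℕ} {s : ℝ} {Ω : Type} [MeasurableSpace Ω] {P : Measure Ω}
    {X : Ω → Vec d} {Y : Ω → ℝ} {M : Ω → Finset (Fin d)}
    {Xi : ℕ → Ω → Vec d} {Yi : ℕ → Ω → ℝ}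
    {Mi : ℕ → ℕ → Ω → Finset (Fin d)} {Mgen : ℕ → Ω → Finset (Fin d)}
    {R : ℕ → Ω → Finset ℕ}
    (hmodel : Model d s P X Y M Xi Yi Mi Mgen R) :
    ∀ n, 1 ≤ n →
      ∫ ω, (if Lset M Mi R n ω = ∅ then 0 else 1 / ((Lset M Mi R n ω).card : ℝ)) ∂P ≤
        2 * (∫ ω, 1 / ((R n ω).card : ℝ) ∂P) +
        2 * (∫ ω, (1 / ((R n ω).card : ℝ)) *
          ∑ i ∈ R n ω, (∫ ω', alphaF P M Mgen n i ω' ∂P) ∂P) := by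
  classical
  intro n hn
  haveI := hmodel.isProb
  have hmf0 : Measurable (fun ω =>
      if Lset M Mi R n ω = ∅ then (0 : ℝ) else 1 / ((Lset M Mi R n ω).card : ℝ)) :=
    (measurable_of_countable
      (fun t : Finset ℕ => if t = ∅ then (0 : ℝ) else 1 / (t.card : ℝ))).comp
      (meas_Lset hmodel n)
  have hif0 : Integrable (fun ω =>
      if Lset M Mi R n ω = ∅ then (0 : ℝ) else 1 / ((Lset M Mi R n ω).card : ℝ)) P := by
    refine integrable_of_bdd (C := 1) hmf0 fun ω => ?_
    by_cases hL : Lset M Mi R n ω = ∅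
    · simp [hL]
    · rw [if_neg hL]
      have h1 : (1 : ℝ) ≤ ((Lset M Mi R n ω).card : ℝ) := by
        exact_mod_cast Finset.card_pos.mpr (Finset.nonempty_of_ne_empty hL)
      rw [abs_of_nonneg (by positivity), div_le_one (by linarith)]
      exact h1
  have hmr : Measurable (fun ω => 1 / ((R n ω).card : ℝ)) :=
    (measurable_of_countable (fun t : Finset ℕ => 1 / (t.card : ℝ))).comp (hmodel.meas_R n)
  have hir : Integrable (fun ω => 1 / ((R n ω).card : ℝ)) P := by
    refine integrable_of_bdd (C := 1) hmr fun ω => ?_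
    have h1 : (1 : ℝ) ≤ ((R n ω).card : ℝ) := by
      exact_mod_cast Finset.card_pos.mpr (hmodel.R_ne n ω hn)
    rw [abs_of_nonneg (by positivity), div_le_one (by linarith)]
    exact h1
  have hig : ∀ i, Integrable (gw R n i) P := fun i =>
    integrable_of_bdd (meas_gw hmodel n i) (gw_abs_le n i)
  have higc : ∀ i, Integrable (fun ω => gw R n i ω * chi M Mi n i ω) P := fun i => by
    refine integrable_of_bdd (C := 1)
      ((meas_gw hmodel n i).mul (meas_chi hmodel n i)) fun ω => ?_
    rw [abs_mul]
    calc |gw R n i ω| * |chi M Mi n i ω| ≤ 1 * 1 :=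
          mul_le_mul (gw_abs_le n i ω) (chi_abs_le n i ω) (abs_nonneg _) zero_le_one
      _ = 1 := mul_one 1
  have hisum : Integrable (fun ω => ∑ i ∈ Finset.Icc 1 n, gw R n i ω * chi M Mi n i ω) P :=
    integrable_finset_sum _ fun i _ => higc i
  have step1 : ∫ ω, (if Lset M Mi R n ω = ∅ then (0 : ℝ)
        else 1 / ((Lset M Mi R n ω).card : ℝ)) ∂P ≤
      ∫ ω, (2 * (1 / ((R n ω).card : ℝ)) +
        2 * ∑ i ∈ Finset.Icc 1 n, gw R n i ω * chi M Mi n i ω) ∂P :=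
    integral_mono hif0 ((hir.const_mul 2).add (hisum.const_mul 2))
      (fun ω => pointwise_bound hmodel hn ω)
  have step2 : ∫ ω, (2 * (1 / ((R n ω).card : ℝ)) +
        2 * ∑ i ∈ Finset.Icc 1 n, gw R n i ω * chi M Mi n i ω) ∂P
      = 2 * (∫ ω, 1 / ((R n ω).card : ℝ) ∂P) +
        2 * (∫ ω, ∑ i ∈ Finset.Icc 1 n, gw R n i ω * chi M Mi n i ω ∂P) := by
    rw [integral_add (hir.const_mul 2) (hisum.const_mul 2), integral_const_mul, integral_const_mul]
  have step3 : ∫ ω, ∑ i ∈ Finset.Icc 1 n, gw R n i ω * chi M Mi n i ω ∂P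
      = ∑ i ∈ Finset.Icc 1 n,
          (∫ ω, gw R n i ω ∂P) * (∫ ω', alphaF P M Mgen n i ω' ∂P) := by
    rw [integral_finset_sum _ fun i _ => higc i]
    refine Finset.sum_congr rfl fun i hi => ?_
    obtain ⟨h1, h2⟩ := Finset.mem_Icc.mp hi
    exact gw_chi_integral hmodel h1 h2
  have step4 : ∫ ω, (1 / ((R n ω).card : ℝ)) *
        ∑ i ∈ R n ω, (∫ ω', alphaF P M Mgen n i ω' ∂P) ∂P
      = ∑ i ∈ Finset.Icc 1 n,
          (∫ ω, gw R n i ω ∂P) * (∫ ω', alphaF P M Mgen n i ω' ∂P) := by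
    have hpt : ∀ ω, (1 / ((R n ω).card : ℝ)) *
        ∑ i ∈ R n ω, (∫ ω', alphaF P M Mgen n i ω' ∂P)
        = ∑ i ∈ Finset.Icc 1 n, gw R n i ω * (∫ ω', alphaF P M Mgen n i ω' ∂P) := by
      intro ω
      rw [Finset.mul_sum]
      have h1 : ∀ i ∈ Finset.Icc 1 n,
          gw R n i ω * (∫ ω', alphaF P M Mgen n i ω' ∂P)
            = if i ∈ R n ω then
                (1 / ((R n ω).card : ℝ)) * (∫ ω', alphaF P M Mgen n i ω' ∂P) else 0 := by
        intro i _
        simp only [gw]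
        split_ifs with h
        · rfl
        · exact zero_mul _
      rw [Finset.sum_congr rfl h1, Finset.sum_ite_mem,
        Finset.inter_eq_right.mpr (hmodel.R_sub n ω)]
    rw [show (fun ω => (1 / ((R n ω).card : ℝ)) *
        ∑ i ∈ R n ω, (∫ ω', alphaF P M Mgen n i ω' ∂P)) =
        fun ω => ∑ i ∈ Finset.Icc 1 n,
          gw R n i ω * (∫ ω', alphaF P M Mgen n i ω' ∂P) from funext hpt]
    rw [integral_finset_sum _ fun i _ => (hig i).mul_const _]
    exact Finset.sum_congr rfl fun i _ => integral_mul_const _ _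
  calc ∫ ω, (if Lset M Mi R n ω = ∅ then (0 : ℝ)
        else 1 / ((Lset M Mi R n ω).card : ℝ)) ∂P
      ≤ ∫ ω, (2 * (1 / ((R n ω).card : ℝ)) +
          2 * ∑ i ∈ Finset.Icc 1 n, gw R n i ω * chi M Mi n i ω) ∂P := step1
    _ = 2 * (∫ ω, 1 / ((R n ω).card : ℝ) ∂P) +
        2 * (∫ ω, ∑ i ∈ Finset.Icc 1 n, gw R n i ω * chi M Mi n i ω ∂P) := step2
    _ = 2 * (∫ ω, 1 / ((R n ω).card : ℝ) ∂P) +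
        2 * (∫ ω, (1 / ((R n ω).card : ℝ)) *
          ∑ i ∈ R n ω, (∫ ω', alphaF P M Mgen n i ω' ∂P) ∂P) := by
        rw [step3, step4]

end Collab
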